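/- Let G be a countable group acting by homeomorphisms on a compact metric space X. If the induced action of G on the Banach space C(X) of continuous real-valued functions (by g·f = f ∘ g⁻¹) is pointwise periodic, then the action of G on X is periodic: some finite-index subgroup of G acts trivially on X. -/

import Mathlib

open Set

theorem stmt_19 {G X : Type*} [Group G] [Countable G] [MetricSpace X] [CompactSpace X]
    [MulAction G X] (hc : ∀ g : G, Continuous fun x : X => g • x)
    (hpp : ∀ f : C(X, ℝ), {h : C(X, ℝ) | ∃ g : G, ∀ x : X, h x = f (g⁻¹ • x)}.Finite) :
    ∃ H : Subgroup G, H.FiniteIndex ∧ ∀ h ∈ H, ∀ x : X, h • x = x := by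
  classical
  set H : Subgroup G :=
    { carrier := {g : G | ∀ x : X, g • x = x}
      one_mem' := fun x => one_smul G x
      mul_mem' := fun {a b} ha hb x => by rw [mul_smul, hb x, ha x]
      inv_mem' := fun {a} ha x => inv_smul_eq_iff.mpr (ha x).symm } with hHdef
  have memH : ∀ g : G, g ∈ H ↔ ∀ x : X, g • x = x := fun g => Iff.rfl
  -- Key: there exists a continuous function whose stabilizer is contained in H
  have key : ∃ f : C(X, ℝ), ∀ g : G, (∀ x : X, f (g⁻¹ • x) = f x) → g ∈ H := by
    by_contra hcon
    push_neg at hcon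
    set A : G → Set C(X, ℝ) := fun g => {f : C(X, ℝ) | ∀ x : X, f (g⁻¹ • x) = f x} with hA
    have hclosed : ∀ g : G, IsClosed (A g) := by
      intro g
      have : A g = ⋂ x : X, {f : C(X, ℝ) | f (g⁻¹ • x) = f x} := by
        ext f; simp [hA, Set.mem_iInter]
      rw [this]
      exact isClosed_iInter fun x =>
        isClosed_eq (continuous_eval_const _) (continuous_eval_const _)
    have hcover : (⋃ g : {g : G // g ∉ H}, A g.1) = univ := by
      ext f
      simp only [mem_iUnion, mem_univ, iff_true]
      obtain ⟨g, hg1, hg2⟩ := hcon f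
      exact ⟨⟨g, hg2⟩, hg1⟩
    haveI : BaireSpace C(X, ℝ) := BaireSpace.of_completelyPseudoMetrizable
    obtain ⟨⟨g, hg⟩, hint⟩ :=
      nonempty_interior_of_iUnion_of_closed (fun i : {g : G // g ∉ H} => hclosed i.1) hcover
    -- A g is a submodule of C(X, ℝ)
    set S : Submodule ℝ C(X, ℝ) :=
      { carrier := A g
        add_mem' := fun {p q} hp hq x => by
          simp only [ContinuousMap.add_apply, hp x, hq x]
        zero_mem' := fun x => rfl
        smul_mem' := fun c p hp x => by
          simp only [ContinuousMap.smul_apply, hp x] } with hS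
    have hStop : S = ⊤ := Submodule.eq_top_of_nonempty_interior' S hint
    apply hg
    intro x
    have hfx : ∀ f : C(X, ℝ), f (g⁻¹ • x) = f x := by
      intro f
      have : f ∈ S := hStop ▸ Submodule.mem_top
      exact this x
    have hd := hfx ⟨fun y => dist y x, continuous_id.dist continuous_const⟩
    simp only [ContinuousMap.coe_mk, dist_self] at hd
    have hxx : g⁻¹ • x = x := dist_eq_zero.mp hd
    calc g • x = g • g⁻¹ • x := by rw [hxx]
      _ = x := smul_inv_smul g x
  obtain ⟨f, hf⟩ := key
  have horb : Finite {h : C(X, ℝ) | ∃ g : G, ∀ x : X, h x = f (g⁻¹ • x)} := (hpp f).to_subtype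
  have hΦmem : ∀ g : G,
      (⟨fun x => f (g⁻¹ • x), f.continuous.comp (hc g⁻¹)⟩ : C(X, ℝ)) ∈
        {h : C(X, ℝ) | ∃ g : G, ∀ x : X, h x = f (g⁻¹ • x)} :=
    fun g => ⟨g, fun _ => rfl⟩
  set Φ : G → {h : C(X, ℝ) | ∃ g : G, ∀ x : X, h x = f (g⁻¹ • x)} :=
    fun g => ⟨_, hΦmem g⟩ with hΦ
  have hwell : ∀ a b : G, (QuotientGroup.leftRel H) a b → Φ a = Φ b := by
    intro a b hab
    rw [QuotientGroup.leftRel_apply] at hab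
    apply Subtype.ext
    ext x
    show f (a⁻¹ • x) = f (b⁻¹ • x)
    have h2 : a⁻¹ • x = b⁻¹ • x := by
      have := (memH _).mp hab (b⁻¹ • x)
      rwa [mul_smul, smul_inv_smul] at this
    rw [h2]
  have hfin : Finite (G ⧸ H) := by
    refine Finite.of_injective (Quotient.lift Φ hwell) ?_
    intro q q'
    induction q using Quotient.inductionOn with | h a =>
    induction q' using Quotient.inductionOn with | h b =>
    intro hab
    have hab2 : Φ a = Φ b := hab
    have hab3 : (Φ a : C(X, ℝ)) = (Φ b : C(X, ℝ)) := Subtype.ext_iff.mp hab2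
    have hab' : ∀ x : X, f (a⁻¹ • x) = f (b⁻¹ • x) := fun x => ContinuousMap.congr_fun hab3 x
    have hk : b⁻¹ * a ∈ H := by
      apply hf
      intro x
      have := hab' (b • x)
      calc f ((b⁻¹ * a)⁻¹ • x) = f (a⁻¹ • b • x) := by rw [mul_inv_rev, inv_inv, mul_smul]
        _ = f (b⁻¹ • b • x) := hab' (b • x)
        _ = f x := by rw [inv_smul_smul]
    have : a⁻¹ * b ∈ H := by
      have := H.inv_mem hk
      rwa [mul_inv_rev, inv_inv] at this
    exact Quotient.sound ((QuotientGroup.leftRel_apply).mpr this)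
  haveI := hfin
  exact ⟨H, H.finiteIndex_of_finite_quotient, fun h hh x => hh x⟩
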